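/- Explicit formula for partially applied eager reserves: let bids be i.i.d. on [0,1] with continuous density f > 0 on [0,1], CDF F(x) = ∫₀ˣ f, and continuously differentiable, nondecreasing virtual value φ(x) = x − (1 − F(x))/f(x), with φ(ρ) = 0 for some ρ ∈ (0,1). For 0 ≤ k ≤ n, with r^k the reserve vector equal to ρ on the first k coordinates and 0 elsewhere, the expected eager revenue equals RevE(k) = ∫_ρ^1 φ(x) · n F(x)^{n−1} f(x) dx − (if k < n then F(ρ)^n · ∫₀^ρ (F(x)/F(ρ))^{n−k} φ'(x) dx else 0). -/

import Mathlib

open MeasureTheory Finset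
open scoped Classical ENNReal Topology

noncomputable def lazyWinner {n : ℕ} (b : Fin (n + 1) → ℝ) : Fin (n + 1) :=
  (Finset.univ.filter fun i => ∀ j, b j ≤ b i).min' (by
    obtain ⟨i, -, hi⟩ := Finset.exists_max_image Finset.univ b ⟨0, Finset.mem_univ 0⟩
    exact ⟨i, Finset.mem_filter.mpr ⟨Finset.mem_univ i, fun j => hi j (Finset.mem_univ j)⟩⟩)

noncomputable def secondMax {n : ℕ} (b : Fin (n + 1) → ℝ) : ℝ :=
  (Finset.univ.erase (lazyWinner b)).fold max 0 b

/-- Revenue of the second price auction with lazy reserves. -/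
noncomputable def lazyRev {n : ℕ} (b r : Fin (n + 1) → ℝ) : ℝ :=
  if r (lazyWinner b) ≤ b (lazyWinner b) then max (r (lazyWinner b)) (secondMax b) else 0

/-- The least-index bidder among those meeting their reserve attaining the highest bid. -/
noncomputable def eagerWinner {n : ℕ} (b r : Fin (n + 1) → ℝ)
    (hS : (Finset.univ.filter fun i => r i ≤ b i).Nonempty) : Fin (n + 1) :=
  ((Finset.univ.filter fun i => r i ≤ b i).filter
      fun i => ∀ k ∈ Finset.univ.filter (fun i => r i ≤ b i), b k ≤ b i).min' (by
    obtain ⟨i, hi, hmax⟩ := Finset.exists_max_image _ b hS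
    exact ⟨i, Finset.mem_filter.mpr ⟨hi, hmax⟩⟩)

/-- Revenue of the second price auction with eager reserves. -/
noncomputable def eagerRev {n : ℕ} (b r : Fin (n + 1) → ℝ) : ℝ :=
  if hS : (Finset.univ.filter fun i => r i ≤ b i).Nonempty then
    max (r (eagerWinner b r hS))
      (((Finset.univ.filter fun i => r i ≤ b i).erase (eagerWinner b r hS)).fold max 0 b)
  else 0

/-- The event "all reserved bids are below ρ and at most one unreserved bid exceeds t". -/
def Ev (N k : ℕ) (ρ t : ℝ) : Set (Fin N → ℝ) :=
  {b | (∀ i : Fin N, (i : ℕ) < k → b i < ρ) ∧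
       ∀ i j : Fin N, ¬ (i : ℕ) < k → ¬ (j : ℕ) < k → t < b i → t < b j → i = j}

section Aux

lemma le_fold_max_of_mem {α : Type*} {s : Finset α} {b : α → ℝ} {i : α} (hi : i ∈ s) :
    b i ≤ s.fold max 0 b :=
  (Finset.le_fold_max _).mpr (Or.inr ⟨i, hi, le_rfl⟩)

lemma fold_max_nonneg {α : Type*} (s : Finset α) (b : α → ℝ) : 0 ≤ s.fold max 0 b :=
  (Finset.le_fold_max _).mpr (Or.inl le_rfl)

variable {n : ℕ}

lemma eagerWinner_spec (b r : Fin (n+1) → ℝ) (hS) :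
    eagerWinner b r hS ∈ (Finset.univ.filter fun i => r i ≤ b i) ∧
    ∀ i ∈ Finset.univ.filter (fun i : Fin (n+1) => r i ≤ b i), b i ≤ b (eagerWinner b r hS) := by
  have h : eagerWinner b r hS ∈ (Finset.univ.filter fun i => r i ≤ b i).filter
      (fun i => ∀ k ∈ Finset.univ.filter (fun i : Fin (n+1) => r i ≤ b i), b k ≤ b i) :=
    Finset.min'_mem _ _
  exact Finset.mem_filter.mp h

lemma eagerRev_nonneg (b r : Fin (n+1) → ℝ) : 0 ≤ eagerRev b r := by
  unfold eagerRev
  split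
  · exact le_trans (fold_max_nonneg _ _) (le_max_right _ _)
  · exact le_rfl

lemma char_low (b : Fin (n+1) → ℝ) {ρ t : ℝ} (ht : 0 ≤ t) (htρ : t < ρ) (k : ℕ) :
    eagerRev b (fun i => if (i : ℕ) < k then ρ else 0) ≤ t ↔ b ∈ Ev (n+1) k ρ t := by
  set r : Fin (n+1) → ℝ := fun i => if (i : ℕ) < k then ρ else 0 with hr
  constructor
  · intro hle
    constructor
    · intro i hik
      by_contra hbi
      push_neg at hbi
      have hiS : i ∈ Finset.univ.filter fun j => r j ≤ b j := by
        simp only [Finset.mem_filter, Finset.mem_univ, true_and, hr, if_pos hik]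
        exact hbi
      have hS : (Finset.univ.filter fun j => r j ≤ b j).Nonempty := ⟨i, hiS⟩
      rw [eagerRev, dif_pos hS] at hle
      obtain ⟨hwS, hwmax⟩ := eagerWinner_spec b r hS
      set w := eagerWinner b r hS with hwdef
      rcases eq_or_ne i w with rfl | hiw
      · have hrw : ρ ≤ r w := by simp [hr, if_pos hik]
        exact absurd hle (not_le.mpr (lt_of_lt_of_le htρ (hrw.trans (le_max_left _ _))))
      · have hmem : i ∈ (Finset.univ.filter fun j => r j ≤ b j).erase w :=
          Finset.mem_erase.mpr ⟨hiw, hiS⟩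
        have : ρ ≤ eagerRev b r := by
          rw [eagerRev, dif_pos hS]
          exact le_trans (le_trans hbi (le_fold_max_of_mem hmem)) (le_max_right _ _)
        rw [eagerRev, dif_pos hS] at this
        exact absurd hle (not_le.mpr (lt_of_lt_of_le htρ this))
    · intro i j hik hjk hti htj
      by_contra hne
      have hiS : i ∈ Finset.univ.filter fun l => r l ≤ b l := by
        simp only [Finset.mem_filter, Finset.mem_univ, true_and, hr, if_neg hik]
        exact le_trans ht hti.le
      have hjS : j ∈ Finset.univ.filter fun l => r l ≤ b l := by
        simp only [Finset.mem_filter, Finset.mem_univ, true_and, hr, if_neg hjk]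
        exact le_trans ht htj.le
      have hS : (Finset.univ.filter fun l => r l ≤ b l).Nonempty := ⟨i, hiS⟩
      rw [eagerRev, dif_pos hS] at hle
      set w := eagerWinner b r hS with hwdef
      have : ∃ l, l ∈ (Finset.univ.filter fun l => r l ≤ b l).erase w ∧ t < b l := by
        rcases eq_or_ne i w with rfl | hiw
        · exact ⟨j, Finset.mem_erase.mpr ⟨Ne.symm hne, hjS⟩, htj⟩
        · exact ⟨i, Finset.mem_erase.mpr ⟨hiw, hiS⟩, hti⟩
      obtain ⟨l, hl, htl⟩ := this
      exact absurd hle (not_le.mpr (lt_of_lt_of_le htl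
        (le_trans (le_fold_max_of_mem hl) (le_max_right _ _))))
  · rintro ⟨hres, hone⟩
    rw [eagerRev]
    split_ifs with hS
    · obtain ⟨hwS, hwmax⟩ := eagerWinner_spec b r hS
      set w := eagerWinner b r hS with hwdef
      have hwk : ¬ (w : ℕ) < k := by
        intro hwk
        have := (Finset.mem_filter.mp hwS).2
        rw [hr] at this
        simp only [if_pos hwk] at this
        exact absurd (hres w hwk) (not_lt.mpr this)
      refine max_le ?_ ((Finset.fold_max_le _).mpr ⟨ht, ?_⟩)
      · simp [hr, if_neg hwk, ht]
      · intro l hl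
        have hlS := Finset.mem_of_mem_erase hl
        have hlw := Finset.ne_of_mem_erase hl
        have hlk : ¬ (l : ℕ) < k := by
          intro hlk
          have := (Finset.mem_filter.mp hlS).2
          rw [hr] at this
          simp only [if_pos hlk] at this
          exact absurd (hres l hlk) (not_lt.mpr this)
        by_contra hbl
        push_neg at hbl
        exact hlw (hone l w hlk hwk hbl (lt_of_lt_of_le hbl (hwmax l hlS)))
    · exact ht

lemma char_high (b : Fin (n+1) → ℝ) {ρ t : ℝ} (hρ : 0 < ρ) (hρt : ρ ≤ t) (k : ℕ) :
    eagerRev b (fun i => if (i : ℕ) < k then ρ else 0) ≤ t ↔ b ∈ Ev (n+1) 0 ρ t := by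
  set r : Fin (n+1) → ℝ := fun i => if (i : ℕ) < k then ρ else 0 with hr
  have ht : 0 ≤ t := hρ.le.trans hρt
  have hrt : ∀ i, r i ≤ t := by
    intro i; rw [hr]; dsimp only; split_ifs
    exacts [hρt, ht]
  constructor
  · intro hle
    refine ⟨fun i hik => absurd hik (Nat.not_lt_zero _), ?_⟩
    intro i j _ _ hti htj
    by_contra hne
    have hiS : i ∈ Finset.univ.filter fun l => r l ≤ b l := by
      simp only [Finset.mem_filter, Finset.mem_univ, true_and]
      exact le_trans (hrt i) hti.le
    have hjS : j ∈ Finset.univ.filter fun l => r l ≤ b l := by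
      simp only [Finset.mem_filter, Finset.mem_univ, true_and]
      exact le_trans (hrt j) htj.le
    have hS : (Finset.univ.filter fun l => r l ≤ b l).Nonempty := ⟨i, hiS⟩
    rw [eagerRev, dif_pos hS] at hle
    set w := eagerWinner b r hS with hwdef
    have : ∃ l, l ∈ (Finset.univ.filter fun l => r l ≤ b l).erase w ∧ t < b l := by
      rcases eq_or_ne i w with rfl | hiw
      · exact ⟨j, Finset.mem_erase.mpr ⟨Ne.symm hne, hjS⟩, htj⟩
      · exact ⟨i, Finset.mem_erase.mpr ⟨hiw, hiS⟩, hti⟩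
    obtain ⟨l, hl, htl⟩ := this
    exact absurd hle (not_le.mpr (lt_of_lt_of_le htl
      (le_trans (le_fold_max_of_mem hl) (le_max_right _ _))))
  · rintro ⟨-, hone⟩
    rw [eagerRev]
    split_ifs with hS
    · obtain ⟨hwS, hwmax⟩ := eagerWinner_spec b r hS
      set w := eagerWinner b r hS with hwdef
      refine max_le (hrt w) ((Finset.fold_max_le _).mpr ⟨ht, ?_⟩)
      intro l hl
      have hlS := Finset.mem_of_mem_erase hl
      have hlw := Finset.ne_of_mem_erase hl
      by_contra hbl
      push_neg at hbl
      exact hlw (hone l w (Nat.not_lt_zero _) (Nat.not_lt_zero _) hbl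
        (lt_of_lt_of_le hbl (hwmax l hlS)))
    · exact ht

end Aux

section EvMeas
variable {N k : ℕ} {ρ t : ℝ}

lemma Ev_eq (N k : ℕ) (ρ t : ℝ) :
    Ev N k ρ t =
      (Set.pi Set.univ fun i : Fin N => if (i : ℕ) < k then Set.Iio ρ else Set.Iic t) ∪
      ⋃ j ∈ Finset.univ.filter (fun j : Fin N => ¬ (j : ℕ) < k),
        Set.pi Set.univ fun i : Fin N =>
          if (i : ℕ) < k then Set.Iio ρ else if i = j then Set.Ioi t else Set.Iic t := by
  ext b
  simp only [Ev, Set.mem_setOf_eq, Set.mem_union, Set.mem_iUnion, Set.mem_pi, Set.mem_univ,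
    true_implies, Finset.mem_filter, Finset.mem_univ, true_and, exists_prop]
  constructor
  · rintro ⟨hres, hone⟩
    by_cases hex : ∃ j : Fin N, ¬ (j : ℕ) < k ∧ t < b j
    · obtain ⟨j, hjk, htj⟩ := hex
      refine Or.inr ⟨j, hjk, fun i => ?_⟩
      by_cases hik : (i : ℕ) < k
      · simpa [hik] using hres i hik
      · rcases eq_or_ne i j with rfl | hij
        · simpa [hik] using htj
        · simp only [if_neg hik, if_neg hij, Set.mem_Iic]
          by_contra hbi
          push_neg at hbi
          exact hij (hone i j hik hjk hbi htj)
    · push_neg at hex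
      refine Or.inl fun i => ?_
      by_cases hik : (i : ℕ) < k
      · simpa [hik] using hres i hik
      · simpa [hik] using hex i (le_of_not_gt hik)
  · rintro (h | ⟨j, hjk, h⟩)
    · refine ⟨fun i hik => by simpa [hik] using h i, fun i j hik hjk hti _ => ?_⟩
      have := h i
      simp only [if_neg hik, Set.mem_Iic] at this
      exact absurd hti (not_lt.mpr this)
    · refine ⟨fun i hik => by simpa [hik] using h i, fun i i' hik hi'k hti hti' => ?_⟩
      have hi : i = j := by
        by_contra hij
        have := h i
        simp only [if_neg hik, if_neg hij, Set.mem_Iic] at this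
        exact absurd hti (not_lt.mpr this)
      have hi' : i' = j := by
        by_contra hij
        have := h i'
        simp only [if_neg hi'k, if_neg hij, Set.mem_Iic] at this
        exact absurd hti' (not_lt.mpr this)
      rw [hi, hi']

lemma Ev_measurableSet (N k : ℕ) (ρ t : ℝ) : MeasurableSet (Ev N k ρ t) := by
  rw [Ev_eq]
  refine MeasurableSet.union (MeasurableSet.univ_pi fun i => ?_)
    (MeasurableSet.biUnion (Set.to_countable _) fun j _ => MeasurableSet.univ_pi fun i => ?_)
  · split_ifs <;> measurability
  · split_ifs <;> measurability

lemma card_filter_fin_lt {N k : ℕ} (hk : k ≤ N) :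
    (Finset.univ.filter fun i : Fin N => (i : ℕ) < k).card = k := by
  have : (Finset.univ.filter fun i : Fin N => (i : ℕ) < k) =
      Finset.map (Fin.castLEEmb hk) Finset.univ := by
    ext i
    constructor
    · intro hi
      rw [Finset.mem_filter] at hi
      exact Finset.mem_map.mpr ⟨⟨(i : ℕ), hi.2⟩, Finset.mem_univ _, by apply Fin.ext; rfl⟩
    · intro hi
      obtain ⟨a, -, rfl⟩ := Finset.mem_map.mp hi
      simp only [Finset.mem_filter, Finset.mem_univ, true_and]
      simpa [Fin.castLEEmb, Fin.castLE] using a.2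
  rw [this, Finset.card_map, Finset.card_univ, Fintype.card_fin]

lemma Ev_measure (ν : Measure ℝ) [SigmaFinite ν] {N k : ℕ} (hk : k ≤ N) (ρ t : ℝ) :
    Measure.pi (fun _ : Fin N => ν) (Ev N k ρ t) =
      ν (Set.Iio ρ) ^ k * (ν (Set.Iic t) ^ (N - k) +
        (N - k : ℕ) * (ν (Set.Ioi t) * ν (Set.Iic t) ^ (N - k - 1))) := by
  set w := ν (Set.Iio ρ)
  set p := ν (Set.Iic t)
  set q := ν (Set.Ioi t)
  have hcard : (Finset.univ.filter fun i : Fin N => (i : ℕ) < k).card = k := card_filter_fin_lt hk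
  have hcardU : (Finset.univ.filter fun i : Fin N => ¬ (i : ℕ) < k).card = N - k := by
    rw [Finset.filter_not, Finset.card_sdiff_of_subset (Finset.filter_subset _ _), hcard,
      Finset.card_univ, Fintype.card_fin]
  rw [Ev_eq]
  have hdisj : Disjoint
      (Set.pi Set.univ fun i : Fin N => if (i : ℕ) < k then Set.Iio ρ else Set.Iic t)
      (⋃ j ∈ Finset.univ.filter (fun j : Fin N => ¬ (j : ℕ) < k),
        Set.pi Set.univ fun i : Fin N =>
          if (i : ℕ) < k then Set.Iio ρ else if i = j then Set.Ioi t else Set.Iic t) := by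
    rw [Set.disjoint_iUnion₂_right]
    intro j hj
    rw [Finset.mem_filter] at hj
    rw [Set.disjoint_left]
    intro b hb hb'
    have h1 := hb j
    have h2 := hb' j
    simp only [Set.mem_univ, true_implies, if_neg hj.2, if_pos rfl, Set.mem_Iic, Set.mem_Ioi,
      Set.mem_pi] at h1 h2
    exact absurd h2 (not_lt.mpr h1)
  rw [measure_union hdisj (MeasurableSet.biUnion (Set.to_countable _)
    (fun j _ => MeasurableSet.univ_pi fun i => by split_ifs <;> measurability))]
  have hpi0 : Measure.pi (fun _ : Fin N => ν)
      (Set.pi Set.univ fun i : Fin N => if (i : ℕ) < k then Set.Iio ρ else Set.Iic t) =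
      w ^ k * p ^ (N - k) := by
    rw [Measure.pi_pi]
    rw [show (fun i : Fin N => ν (if (i : ℕ) < k then Set.Iio ρ else Set.Iic t)) =
      (fun i : Fin N => if (i : ℕ) < k then w else p) from funext fun i => by split_ifs <;> rfl]
    rw [Finset.prod_ite, Finset.prod_const, Finset.prod_const, hcard, hcardU]
  have hpi1 : ∀ j ∈ Finset.univ.filter (fun j : Fin N => ¬ (j : ℕ) < k),
      Measure.pi (fun _ : Fin N => ν)
        (Set.pi Set.univ fun i : Fin N =>
          if (i : ℕ) < k then Set.Iio ρ else if i = j then Set.Ioi t else Set.Iic t) =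
      w ^ k * (q * p ^ (N - k - 1)) := by
    intro j hj
    rw [Measure.pi_pi]
    rw [show (fun i : Fin N => ν (if (i : ℕ) < k then Set.Iio ρ else
        if i = j then Set.Ioi t else Set.Iic t)) =
      (fun i : Fin N => if (i : ℕ) < k then w else if i = j then q else p) from
        funext fun i => by split_ifs <;> rfl]
    rw [Finset.prod_ite, Finset.prod_const, hcard]
    congr 1
    have hjU : j ∈ Finset.univ.filter (fun i : Fin N => ¬ (i : ℕ) < k) := hj
    rw [← Finset.mul_prod_erase _ _ hjU, if_pos rfl]
    congr 1
    rw [Finset.prod_congr rfl (fun i hi => if_neg (Finset.ne_of_mem_erase hi)),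
      Finset.prod_const, Finset.card_erase_of_mem hjU, hcardU]
  rw [hpi0, measure_biUnion_finset ?_ (fun j _ => MeasurableSet.univ_pi fun i => by
    split_ifs <;> measurability)]
  · rw [Finset.sum_congr rfl hpi1, Finset.sum_const, hcardU, mul_add]
    congr 1
    simp [nsmul_eq_mul, mul_comm, mul_assoc, mul_left_comm]
  · -- pairwise disjoint
    intro j hj j' hj' hjj'
    simp only [Finset.coe_filter, Set.mem_setOf_eq, Finset.mem_univ, true_and] at hj hj'
    rw [Function.onFun, Set.disjoint_left]
    intro b hb hb'
    have h1 := Set.mem_univ_pi.mp hb j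
    have h2 := Set.mem_univ_pi.mp hb' j
    rw [if_neg hj, if_pos rfl] at h1
    rw [if_neg hj, if_neg hjj'] at h2
    exact absurd (Set.mem_Iic.mp h2) (not_le.mpr (Set.mem_Ioi.mp h1))
end EvMeas

section Density
variable {f : ℝ → ℝ} (hfc : ContinuousOn f (Set.Icc 0 1))
  (hfpos : ∀ x ∈ Set.Icc (0:ℝ) 1, 0 < f x)
  (hfout : ∀ x, x ∉ Set.Icc (0:ℝ) 1 → f x = 0)
include hfc hfpos hfout

lemma f_nonneg : ∀ x, 0 ≤ f x := by
  intro x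
  by_cases hx : x ∈ Set.Icc (0:ℝ) 1
  · exact (hfpos x hx).le
  · exact le_of_eq (hfout x hx).symm

lemma f_measurable : Measurable f := by
  apply measurable_of_isOpen
  intro U hU
  obtain ⟨V, hV, hVeq⟩ := continuousOn_iff'.mp hfc U hU
  have hpre : f ⁻¹' U =
      (V ∩ Set.Icc 0 1) ∪ (if (0:ℝ) ∈ U then (Set.Icc (0:ℝ) 1)ᶜ else ∅) := by
    ext x
    by_cases hx : x ∈ Set.Icc (0:ℝ) 1
    · have h1 : x ∈ f ⁻¹' U ↔ x ∈ V := by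
        have := Set.ext_iff.mp hVeq x
        simp only [Set.mem_inter_iff, hx, and_true] at this
        exact this
      simp only [Set.mem_union, Set.mem_inter_iff, hx, and_true]
      split_ifs <;> simp [h1, hx]
    · have h0 : f x = 0 := hfout x hx
      simp only [Set.mem_preimage, h0, Set.mem_union, Set.mem_inter_iff]
      split_ifs with h <;> simp [h, hx]
  rw [hpre]
  refine (hV.measurableSet.inter measurableSet_Icc).union ?_
  split_ifs <;> simp [measurableSet_Icc.compl]

lemma f_integrable : Integrable f := by
  have h1 : IntegrableOn f (Set.Icc 0 1) volume := hfc.integrableOn_Icc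
  have h2 : IntegrableOn f (Set.Icc (0:ℝ) 1)ᶜ volume := by
    apply IntegrableOn.congr_fun (integrableOn_zero) ?_ measurableSet_Icc.compl
    intro x hx
    exact (hfout x hx).symm
  have := h1.union h2
  rwa [Set.union_compl_self, integrableOn_univ] at this

variable {F : ℝ → ℝ} (hF : ∀ x, F x = ∫ t in (0:ℝ)..x, f t)
include hF

lemma F_continuous : Continuous F := by
  have h : Continuous fun x => ∫ t in (0:ℝ)..x, f t :=
    intervalIntegral.continuous_primitive
      (fun a b => (f_integrable hfc hfpos hfout).intervalIntegrable) 0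
  exact h.congr fun x => (hF x).symm

lemma F_hasDeriv : ∀ x ∈ Set.Ioo (0:ℝ) 1, HasDerivAt F (f x) x := by
  intro x hx
  have hci : ContinuousAt f x := hfc.continuousAt (Icc_mem_nhds hx.1 hx.2)
  have h := intervalIntegral.integral_hasDerivAt_right
    ((f_integrable hfc hfpos hfout).intervalIntegrable (a := 0) (b := x))
    ((f_measurable hfc hfpos hfout).stronglyMeasurable.stronglyMeasurableAtFilter)
    hci
  exact h.congr_of_eventuallyEq (Filter.Eventually.of_forall fun y => hF y)

lemma F_sub (x y : ℝ) : F y - F x = ∫ t in x..y, f t := by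
  rw [hF x, hF y]
  rw [← intervalIntegral.integral_add_adjacent_intervals
    ((f_integrable hfc hfpos hfout).intervalIntegrable (a := 0) (b := x))
    ((f_integrable hfc hfpos hfout).intervalIntegrable (a := x) (b := y))]
  ring

lemma F_mono : Monotone F := by
  intro x y hxy
  have h := F_sub hfc hfpos hfout hF x y
  have : 0 ≤ ∫ t in x..y, f t :=
    intervalIntegral.integral_nonneg hxy (fun u _ => f_nonneg hfc hfpos hfout u)
  linarith

lemma F_zero : F 0 = 0 := by rw [hF]; exact intervalIntegral.integral_same

lemma F_ge_one (t : ℝ) (ht : 1 ≤ t) : F t = F 1 := by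
  have h := F_sub hfc hfpos hfout hF 1 t
  have hz : (∫ u in (1:ℝ)..t, f u) = 0 := by
    rw [intervalIntegral.integral_of_le ht]
    rw [setIntegral_congr_fun measurableSet_Ioc (g := fun _ => (0:ℝ))
      (fun x hx => hfout x (fun hmem => absurd hmem.2 (not_le.mpr hx.1)))]
    simp
  linarith

lemma F_nonneg (t : ℝ) (ht : 0 ≤ t) : 0 ≤ F t := by
  have := F_mono hfc hfpos hfout hF ht
  rwa [F_zero hfc hfpos hfout hF] at this

-- the density measure
lemma mu0_Iic (t : ℝ) (ht : 0 ≤ t) :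
    (volume.withDensity fun x => ENNReal.ofReal (f x)) (Set.Iic t) = ENNReal.ofReal (F t) := by
  rw [withDensity_apply _ measurableSet_Iic]
  have hsplit : Set.Iic t = Set.Iio 0 ∪ Set.Icc 0 t := by
    ext x
    simp only [Set.mem_Iic, Set.mem_union, Set.mem_Iio, Set.mem_Icc]
    constructor
    · intro h; by_cases hx : (0:ℝ) ≤ x
      · exact Or.inr ⟨hx, h⟩
      · exact Or.inl (not_le.mp hx)
    · rintro (h | ⟨-, h⟩)
      · linarith
      · exact h
  rw [hsplit, lintegral_union measurableSet_Icc (by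
    rw [Set.disjoint_left]; intro x h1 h2; exact absurd h2.1 (not_le.mpr h1))]
  have h1 : ∫⁻ x in Set.Iio (0:ℝ), ENNReal.ofReal (f x) = 0 := by
    have heq : ∫⁻ x in Set.Iio (0:ℝ), ENNReal.ofReal (f x) = ∫⁻ _ in Set.Iio (0:ℝ), (0:ℝ≥0∞) :=
      setLIntegral_congr_fun measurableSet_Iio (fun x hx => by
        rw [hfout x (fun hmem => absurd hmem.1 (not_le.mpr hx))]; simp)
    simp [heq]
  have h2 : ∫⁻ x in Set.Icc 0 t, ENNReal.ofReal (f x) = ENNReal.ofReal (F t) := by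
    rw [← ofReal_integral_eq_lintegral_ofReal
      ((f_integrable hfc hfpos hfout).integrableOn)
      (ae_of_all _ fun x => f_nonneg hfc hfpos hfout x)]
    congr 1
    rw [hF, intervalIntegral.integral_of_le ht, integral_Icc_eq_integral_Ioc]
  rw [h1, h2, zero_add]

lemma mu0_Iio (t : ℝ) (ht : 0 ≤ t) :
    (volume.withDensity fun x => ENNReal.ofReal (f x)) (Set.Iio t) = ENNReal.ofReal (F t) := by
  have hIic := mu0_Iic hfc hfpos hfout hF t ht
  have hsing : (volume.withDensity fun x => ENNReal.ofReal (f x)) {t} = 0 := by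
    rw [withDensity_apply _ (measurableSet_singleton t)]
    rw [Measure.restrict_eq_zero.mpr (by simp)]
    simp
  rw [← Set.Iio_union_right, measure_union (by simp) (measurableSet_singleton t), hsing,
    add_zero] at hIic
  exact hIic
end Density

theorem eager_ab_testing_formula {n : ℕ} (f : ℝ → ℝ)
    (hfc : ContinuousOn f (Set.Icc 0 1)) (hfpos : ∀ x ∈ Set.Icc (0:ℝ) 1, 0 < f x)
    (hfout : ∀ x, x ∉ Set.Icc (0:ℝ) 1 → f x = 0)
    [IsProbabilityMeasure (volume.withDensity fun x => ENNReal.ofReal (f x))]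
    (F : ℝ → ℝ) (hF : ∀ x, F x = ∫ t in (0:ℝ)..x, f t)
    (φ : ℝ → ℝ) (hφ : ∀ x, φ x = x - (1 - F x) / f x)
    (hφC1 : ContDiffOn ℝ 1 φ (Set.Icc 0 1)) (hreg : MonotoneOn φ (Set.Icc 0 1))
    (ρ : ℝ) (hρ : ρ ∈ Set.Ioo (0:ℝ) 1) (hφρ : φ ρ = 0)
    (k : ℕ) (hk : k ≤ n + 1) :
    (∫⁻ b, ENNReal.ofReal (eagerRev b fun i => if (i : ℕ) < k then ρ else 0)
        ∂(Measure.pi fun _ : Fin (n + 1) =>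
          volume.withDensity fun x => ENNReal.ofReal (f x))).toReal =
      (∫ x in ρ..1, φ x * ((n + 1 : ℝ) * F x ^ n * f x)) -
        (if k < n + 1 then
          F ρ ^ (n + 1) * ∫ x in (0:ℝ)..ρ, (F x / F ρ) ^ (n + 1 - k) * deriv φ x
         else 0) := by
  classical
  obtain ⟨hρ0, hρ1⟩ := hρ
  have hf0 : ∀ x, 0 ≤ f x := f_nonneg hfc hfpos hfout
  have hFc : Continuous F := F_continuous hfc hfpos hfout hF
  have hFd : ∀ x ∈ Set.Ioo (0:ℝ) 1, HasDerivAt F (f x) x := F_hasDeriv hfc hfpos hfout hF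
  have hFmono : Monotone F := F_mono hfc hfpos hfout hF
  have hF0 : F 0 = 0 := F_zero hfc hfpos hfout hF
  have hFnn : ∀ t, 0 ≤ t → 0 ≤ F t := F_nonneg hfc hfpos hfout hF
  have hfi : ∀ a b : ℝ, IntervalIntegrable f volume a b :=
    fun a b => (f_integrable hfc hfpos hfout).intervalIntegrable
  set μ₀ : Measure ℝ := volume.withDensity fun x => ENNReal.ofReal (f x) with hμ₀def
  haveI hprob0 : IsProbabilityMeasure μ₀ := by rw [hμ₀def]; infer_instance
  have hIic : ∀ t : ℝ, 0 ≤ t → μ₀ (Set.Iic t) = ENNReal.ofReal (F t) :=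
    fun t ht => mu0_Iic hfc hfpos hfout hF t ht
  have hIio : ∀ t : ℝ, 0 ≤ t → μ₀ (Set.Iio t) = ENNReal.ofReal (F t) :=
    fun t ht => mu0_Iio hfc hfpos hfout hF t ht
  have hF1 : F 1 = 1 := by
    have h1 : μ₀ (Set.Ioi (1:ℝ)) = 0 := by
      rw [hμ₀def, withDensity_apply _ measurableSet_Ioi]
      have heq : ∫⁻ x in Set.Ioi (1:ℝ), ENNReal.ofReal (f x) = ∫⁻ _ in Set.Ioi (1:ℝ), (0:ℝ≥0∞) :=
        setLIntegral_congr_fun measurableSet_Ioi (fun x hx => by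
          rw [hfout x (fun hmem => absurd hmem.2 (not_le.mpr hx))]; simp)
      simp [heq]
    have h2 := prob_compl_eq_one_sub (μ := μ₀) (measurableSet_Iic (a := (1:ℝ)))
    rw [Set.compl_Iic, h1, hIic 1 zero_le_one] at h2
    have hge : (1:ℝ≥0∞) ≤ ENNReal.ofReal (F 1) := tsub_eq_zero_iff_le.mp h2.symm
    have hle : ENNReal.ofReal (F 1) ≤ 1 := by
      rw [← hIic 1 zero_le_one]; exact prob_le_one
    exact ENNReal.ofReal_eq_one.mp (le_antisymm hle hge)
  have hFt1 : ∀ t : ℝ, 1 ≤ t → F t = 1 :=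
    fun t ht => (F_ge_one hfc hfpos hfout hF t ht).trans hF1
  have hFle1 : ∀ t : ℝ, F t ≤ 1 := by
    intro t
    rcases le_total t 1 with h | h
    · exact (hFmono h).trans_eq hF1
    · exact le_of_eq (hFt1 t h)
  have hIoi : ∀ t : ℝ, 0 ≤ t → μ₀ (Set.Ioi t) = ENNReal.ofReal (1 - F t) := by
    intro t ht
    have hc := prob_compl_eq_one_sub (μ := μ₀) (measurableSet_Iic (a := t))
    rw [Set.compl_Iic] at hc
    rw [hc, hIic t ht, ENNReal.ofReal_sub 1 (hFnn t ht), ENNReal.ofReal_one]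
  have hFρpos : 0 < F ρ := by
    have h := intervalIntegral.intervalIntegral_pos_of_pos_on (hfi 0 ρ)
      (fun x hx => hfpos x ⟨hx.1.le, hx.2.le.trans hρ1.le⟩) hρ0
    rwa [← hF ρ] at h
  set r : Fin (n+1) → ℝ := fun i => if (i : ℕ) < k then ρ else 0 with hrdef
  set μ : Measure (Fin (n+1) → ℝ) := Measure.pi fun _ : Fin (n+1) => μ₀ with hμdef
  haveI hprob : IsProbabilityMeasure μ := by rw [hμdef]; infer_instance
  set m : ℕ := n + 1 - k with hmdef
  set P₁ : ℝ → ℝ := fun t => F ρ ^ k * (F t ^ m + (m : ℝ) * ((1 - F t) * F t ^ (m-1)))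
    with hP₁def
  set P₂ : ℝ → ℝ := fun t => F t ^ (n+1) + ((n+1 : ℕ) : ℝ) * ((1 - F t) * F t ^ n) with hP₂def
  have hP₁cont : Continuous P₁ := by
    rw [hP₁def]
    exact continuous_const.mul ((hFc.pow m).add (continuous_const.mul
      ((continuous_const.sub hFc).mul (hFc.pow (m-1)))))
  have hP₂cont : Continuous P₂ := by
    rw [hP₂def]
    exact (hFc.pow (n+1)).add (continuous_const.mul
      ((continuous_const.sub hFc).mul (hFc.pow n)))
  -- measure of the events
  have hEvP1 : ∀ t : ℝ, 0 ≤ t → μ (Ev (n+1) k ρ t) = ENNReal.ofReal (P₁ t) := by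
    intro t ht
    have h1 : 0 ≤ F t := hFnn t ht
    have h2 : 0 ≤ 1 - F t := sub_nonneg.mpr (hFle1 t)
    have h3 : 0 ≤ F ρ := hFρpos.le
    rw [hμdef, Ev_measure μ₀ hk ρ t, hIio ρ hρ0.le, hIic t ht, hIoi t ht]
    simp only [hP₁def]
    rw [ENNReal.ofReal_mul (pow_nonneg h3 k), ENNReal.ofReal_pow h3,
      ENNReal.ofReal_add (pow_nonneg h1 m) (by positivity), ENNReal.ofReal_pow h1,
      ENNReal.ofReal_mul (Nat.cast_nonneg m), ENNReal.ofReal_natCast,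
      ENNReal.ofReal_mul h2, ENNReal.ofReal_pow h1, hmdef]
  have hEvP2 : ∀ t : ℝ, 0 ≤ t → μ (Ev (n+1) 0 ρ t) = ENNReal.ofReal (P₂ t) := by
    intro t ht
    have h1 : 0 ≤ F t := hFnn t ht
    have h2 : 0 ≤ 1 - F t := sub_nonneg.mpr (hFle1 t)
    have h3 : 0 ≤ F ρ := hFρpos.le
    rw [hμdef, Ev_measure μ₀ (Nat.zero_le (n+1)) ρ t, hIio ρ hρ0.le, hIic t ht, hIoi t ht]
    simp only [Nat.sub_zero, Nat.add_sub_cancel, pow_zero, one_mul, hP₂def]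
    rw [ENNReal.ofReal_add (pow_nonneg h1 (n+1)) (by positivity), ENNReal.ofReal_pow h1,
      ENNReal.ofReal_mul (Nat.cast_nonneg (n+1)), ENNReal.ofReal_natCast,
      ENNReal.ofReal_mul h2, ENNReal.ofReal_pow h1]
  have hP₁mem : ∀ t : ℝ, 0 ≤ t → 0 ≤ P₁ t ∧ P₁ t ≤ 1 := by
    intro t ht
    have h1 : 0 ≤ F t := hFnn t ht
    have h2 : 0 ≤ 1 - F t := sub_nonneg.mpr (hFle1 t)
    have h3 : 0 ≤ F ρ := hFρpos.le
    have hnn : 0 ≤ P₁ t := by rw [hP₁def]; positivity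
    refine ⟨hnn, ?_⟩
    have hle : ENNReal.ofReal (P₁ t) ≤ 1 := by rw [← hEvP1 t ht]; exact prob_le_one
    rwa [← ENNReal.ofReal_one, ENNReal.ofReal_le_ofReal_iff zero_le_one] at hle
  have hP₂mem : ∀ t : ℝ, 0 ≤ t → 0 ≤ P₂ t ∧ P₂ t ≤ 1 := by
    intro t ht
    have h1 : 0 ≤ F t := hFnn t ht
    have h2 : 0 ≤ 1 - F t := sub_nonneg.mpr (hFle1 t)
    have hnn : 0 ≤ P₂ t := by rw [hP₂def]; positivity
    refine ⟨hnn, ?_⟩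
    have hle : ENNReal.ofReal (P₂ t) ≤ 1 := by rw [← hEvP2 t ht]; exact prob_le_one
    rwa [← ENNReal.ofReal_one, ENNReal.ofReal_le_ofReal_iff zero_le_one] at hle
  -- distribution of the revenue
  have hset_low : ∀ t : ℝ, 0 ≤ t → t < ρ → {b : Fin (n+1) → ℝ | eagerRev b r ≤ t} =
      Ev (n+1) k ρ t := by
    intro t ht htρ
    ext b
    exact char_low b ht htρ k
  have hset_high : ∀ t : ℝ, ρ ≤ t → {b : Fin (n+1) → ℝ | eagerRev b r ≤ t} =
      Ev (n+1) 0 ρ t := by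
    intro t ht
    ext b
    exact char_high b hρ0 ht k
  have hcompl : ∀ t : ℝ, {b : Fin (n+1) → ℝ | t < eagerRev b r} =
      {b : Fin (n+1) → ℝ | eagerRev b r ≤ t}ᶜ := by
    intro t; ext b; simp [not_le]
  have hmeas_low : ∀ t : ℝ, 0 ≤ t → t < ρ →
      μ {b : Fin (n+1) → ℝ | t < eagerRev b r} = ENNReal.ofReal (1 - P₁ t) := by
    intro t ht htρ
    rw [hcompl t, hset_low t ht htρ, prob_compl_eq_one_sub (Ev_measurableSet _ _ _ _),
      hEvP1 t ht, ENNReal.ofReal_sub 1 (hP₁mem t ht).1, ENNReal.ofReal_one]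
  have hmeas_high : ∀ t : ℝ, ρ ≤ t →
      μ {b : Fin (n+1) → ℝ | t < eagerRev b r} = ENNReal.ofReal (1 - P₂ t) := by
    intro t ht
    have ht0 : 0 ≤ t := hρ0.le.trans ht
    rw [hcompl t, hset_high t ht, prob_compl_eq_one_sub (Ev_measurableSet _ _ _ _),
      hEvP2 t ht0, ENNReal.ofReal_sub 1 (hP₂mem t ht0).1, ENNReal.ofReal_one]
  -- measurability of the revenue
  have hRmeas : Measurable fun b : Fin (n+1) → ℝ => eagerRev b r := by
    apply measurable_of_Ioi
    intro t
    have hpre : (fun b : Fin (n+1) → ℝ => eagerRev b r) ⁻¹' Set.Ioi t =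
        {b : Fin (n+1) → ℝ | eagerRev b r ≤ t}ᶜ := by
      ext b; simp [not_le]
    rw [hpre]
    rcases lt_or_ge t 0 with ht | ht
    · have : {b : Fin (n+1) → ℝ | eagerRev b r ≤ t} = ∅ := by
        ext b
        simp only [Set.mem_setOf_eq, Set.mem_empty_iff_false, iff_false, not_le]
        exact lt_of_lt_of_le ht (eagerRev_nonneg b r)
      rw [this, Set.compl_empty]
      exact MeasurableSet.univ
    rcases lt_or_ge t ρ with htρ | htρ
    · rw [hset_low t ht htρ]; exact (Ev_measurableSet _ _ _ _).compl
    · rw [hset_high t htρ]; exact (Ev_measurableSet _ _ _ _).compl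
  -- layer cake
  rw [lintegral_eq_lintegral_meas_lt μ (ae_of_all _ fun b => eagerRev_nonneg b r)
    hRmeas.aemeasurable]
  have hsplitset : Set.Ioi (0:ℝ) = Set.Ioo 0 ρ ∪ (Set.Ico ρ 1 ∪ Set.Ici 1) := by
    ext x
    simp only [Set.mem_Ioi, Set.mem_union, Set.mem_Ioo, Set.mem_Ico, Set.mem_Ici]
    constructor
    · intro hx
      rcases lt_or_ge x ρ with h | h
      · exact Or.inl ⟨hx, h⟩
      · rcases lt_or_ge x 1 with h' | h'
        · exact Or.inr (Or.inl ⟨h, h'⟩)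
        · exact Or.inr (Or.inr h')
    · rintro (⟨h, -⟩ | ⟨h, -⟩ | h)
      · exact h
      · exact hρ0.trans_le h
      · exact lt_of_lt_of_le one_pos h
  have hdisj1 : Disjoint (Set.Ioo (0:ℝ) ρ) (Set.Ico ρ 1 ∪ Set.Ici 1) := by
    rw [Set.disjoint_left]
    rintro x hx (h | h)
    · exact absurd h.1 (not_le.mpr hx.2)
    · exact absurd (hρ1.le.trans h) (not_le.mpr hx.2)
  have hdisj2 : Disjoint (Set.Ico ρ (1:ℝ)) (Set.Ici (1:ℝ)) := by
    rw [Set.disjoint_left]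
    intro x hx h
    exact absurd h (not_le.mpr hx.2)
  rw [hsplitset, lintegral_union (measurableSet_Ico.union measurableSet_Ici) hdisj1,
    lintegral_union measurableSet_Ici hdisj2]
  have hpiece1 : ∫⁻ t in Set.Ioo (0:ℝ) ρ, μ {b : Fin (n+1) → ℝ | t < eagerRev b r} =
      ENNReal.ofReal (∫ t in (0:ℝ)..ρ, (1 - P₁ t)) := by
    rw [setLIntegral_congr_fun measurableSet_Ioo
      (fun t ht => hmeas_low t ht.1.le ht.2)]
    rw [← ofReal_integral_eq_lintegral_ofReal (f := fun t => 1 - P₁ t)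
      (((continuous_const.sub hP₁cont).integrableOn_Icc (a := 0) (b := ρ)).mono_set
        Set.Ioo_subset_Icc_self)
      ((ae_restrict_iff' measurableSet_Ioo).mpr (ae_of_all _ fun t ht =>
        sub_nonneg.mpr (hP₁mem t ht.1.le).2))]
    congr 1
    rw [intervalIntegral.integral_of_le hρ0.le, integral_Ioc_eq_integral_Ioo]
  have hpiece2 : ∫⁻ t in Set.Ico ρ (1:ℝ), μ {b : Fin (n+1) → ℝ | t < eagerRev b r} =
      ENNReal.ofReal (∫ t in ρ..1, (1 - P₂ t)) := by
    rw [setLIntegral_congr_fun measurableSet_Ico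
      (fun t ht => hmeas_high t ht.1)]
    rw [← ofReal_integral_eq_lintegral_ofReal (f := fun t => 1 - P₂ t)
      (((continuous_const.sub hP₂cont).integrableOn_Icc (a := ρ) (b := 1)).mono_set
        Set.Ico_subset_Icc_self)
      ((ae_restrict_iff' measurableSet_Ico).mpr (ae_of_all _ fun t ht =>
        sub_nonneg.mpr (hP₂mem t (hρ0.le.trans ht.1)).2))]
    congr 1
    rw [intervalIntegral.integral_of_le hρ1.le, integral_Ioc_eq_integral_Ioo,
      ← integral_Ico_eq_integral_Ioo]
  have hpiece3 : ∫⁻ t in Set.Ici (1:ℝ), μ {b : Fin (n+1) → ℝ | t < eagerRev b r} = 0 := by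
    have heq : ∫⁻ t in Set.Ici (1:ℝ), μ {b : Fin (n+1) → ℝ | t < eagerRev b r} =
        ∫⁻ _ in Set.Ici (1:ℝ), (0:ℝ≥0∞) := by
      apply setLIntegral_congr_fun measurableSet_Ici
      intro t ht
      dsimp only
      rw [hmeas_high t (hρ1.le.trans ht)]
      rw [hP₂def]
      simp [hFt1 t ht]
    simp [heq]
  rw [hpiece1, hpiece2, hpiece3, add_zero]
  have hA0 : 0 ≤ ∫ t in (0:ℝ)..ρ, (1 - P₁ t) :=
    intervalIntegral.integral_nonneg hρ0.le
      (fun t ht => sub_nonneg.mpr (hP₁mem t ht.1).2)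
  have hB0 : 0 ≤ ∫ t in ρ..1, (1 - P₂ t) :=
    intervalIntegral.integral_nonneg hρ1.le
      (fun t ht => sub_nonneg.mpr (hP₂mem t (hρ0.le.trans ht.1)).2)
  rw [← ENNReal.ofReal_add hA0 hB0, ENNReal.toReal_ofReal (by positivity)]
  -- now a purely real statement
  have hFiic : ∀ (j : ℕ) (a b : ℝ), IntervalIntegrable (fun t => F t ^ j) volume a b :=
    fun j a b => (hFc.pow j).intervalIntegrable a b
  have hxFpow : ∀ (j : ℕ) (a b : ℝ), 0 ≤ a → a ≤ b → b ≤ 1 →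
      ∫ t in a..b, (F t ^ j + t * (j:ℝ) * F t ^ (j-1) * f t) = b * F b ^ j - a * F a ^ j := by
    intro j a b ha hab hb1
    have hint : IntervalIntegrable (fun t => F t ^ j + t * (j:ℝ) * F t ^ (j-1) * f t)
        volume a b := by
      apply IntervalIntegrable.add (hFiic j a b)
      exact (hfi a b).continuousOn_mul
        ((continuous_id.mul continuous_const).mul (hFc.pow (j-1))).continuousOn
    apply intervalIntegral.integral_eq_sub_of_hasDerivAt_of_le hab
      ((continuous_id.mul (hFc.pow j)).continuousOn) ?_ hint
    intro x hx
    have hx' : x ∈ Set.Ioo (0:ℝ) 1 := ⟨lt_of_le_of_lt ha hx.1, lt_of_lt_of_le hx.2 hb1⟩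
    have h := (hasDerivAt_id x).mul ((hFd x hx').pow j)
    convert h using 1
    · rfl
    · simp only [id_eq, Pi.pow_apply]
      ring
  have hI1 : IntervalIntegrable (fun t => F t ^ m) volume 0 ρ := hFiic m 0 ρ
  have hI2 : IntervalIntegrable (fun t => (1 - F t) * F t ^ (m-1)) volume 0 ρ :=
    ((continuous_const.sub hFc).mul (hFc.pow (m-1))).intervalIntegrable 0 ρ
  have hJ1 : IntervalIntegrable (fun t => F t ^ (n+1)) volume ρ 1 := hFiic (n+1) ρ 1
  have hJ2 : IntervalIntegrable (fun t => (1 - F t) * F t ^ n) volume ρ 1 :=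
    ((continuous_const.sub hFc).mul (hFc.pow n)).intervalIntegrable ρ 1
  have hAeq : ∫ t in (0:ℝ)..ρ, (1 - P₁ t) =
      ρ - F ρ ^ k * ((∫ t in (0:ℝ)..ρ, F t ^ m) +
        (m:ℝ) * ∫ t in (0:ℝ)..ρ, (1 - F t) * F t ^ (m-1)) := by
    have h1 : ∫ t in (0:ℝ)..ρ, (1 - P₁ t) =
        (∫ _ in (0:ℝ)..ρ, (1:ℝ)) - ∫ t in (0:ℝ)..ρ, P₁ t :=
      intervalIntegral.integral_sub intervalIntegrable_const (hP₁cont.intervalIntegrable 0 ρ)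
    rw [h1, intervalIntegral.integral_const, smul_eq_mul, sub_zero, mul_one]
    congr 1
    calc ∫ t in (0:ℝ)..ρ, P₁ t
        = ∫ t in (0:ℝ)..ρ, (F ρ ^ k * (F t ^ m + (m:ℝ) * ((1 - F t) * F t ^ (m-1)))) := by
          simp only [hP₁def]
      _ = F ρ ^ k * ∫ t in (0:ℝ)..ρ, (F t ^ m + (m:ℝ) * ((1 - F t) * F t ^ (m-1))) := by
          rw [← intervalIntegral.integral_const_mul]
      _ = _ := by
          rw [intervalIntegral.integral_add hI1 (hI2.const_mul _),
            intervalIntegral.integral_const_mul]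
  have hBeq : ∫ t in ρ..1, (1 - P₂ t) =
      (1 - ρ) - ((∫ t in ρ..1, F t ^ (n+1)) +
        ((n+1 : ℕ) : ℝ) * ∫ t in ρ..1, (1 - F t) * F t ^ n) := by
    have h1 : ∫ t in ρ..1, (1 - P₂ t) =
        (∫ _ in ρ..1, (1:ℝ)) - ∫ t in ρ..1, P₂ t :=
      intervalIntegral.integral_sub intervalIntegrable_const (hP₂cont.intervalIntegrable ρ 1)
    rw [h1, intervalIntegral.integral_const, smul_eq_mul, mul_one]
    congr 1
    calc ∫ t in ρ..1, P₂ t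
        = ∫ t in ρ..1, (F t ^ (n+1) + ((n+1 : ℕ) : ℝ) * ((1 - F t) * F t ^ n)) := by
          simp only [hP₂def]
      _ = _ := by
          rw [intervalIntegral.integral_add hJ1 (hJ2.const_mul _),
            intervalIntegral.integral_const_mul]
  have hFTC1 : ∫ t in ρ..1, (F t ^ (n+1) + t * ((n+1 : ℕ) : ℝ) * F t ^ n * f t) =
      1 - ρ * F ρ ^ (n+1) := by
    have h := hxFpow (n+1) ρ 1 hρ0.le hρ1.le le_rfl
    rw [hF1, one_pow, Nat.add_sub_cancel] at h
    simpa using h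
  have hxint : IntervalIntegrable (fun t => t * ((n+1 : ℕ) : ℝ) * F t ^ n * f t) volume ρ 1 :=
    (hfi ρ 1).continuousOn_mul
      ((continuous_id.mul continuous_const).mul (hFc.pow n)).continuousOn
  have hsplit1 : ∫ t in ρ..1, t * ((n+1 : ℕ) : ℝ) * F t ^ n * f t =
      (1 - ρ * F ρ ^ (n+1)) - ∫ t in ρ..1, F t ^ (n+1) := by
    rw [← hFTC1, intervalIntegral.integral_add hJ1 hxint]; ring
  have hR1eq : ∫ x in ρ..1, φ x * ((↑n + 1) * F x ^ n * f x) =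
      ((1 - ρ * F ρ ^ (n+1)) - ∫ t in ρ..1, F t ^ (n+1)) -
        ((n+1 : ℕ) : ℝ) * ∫ t in ρ..1, (1 - F t) * F t ^ n := by
    have hcongr : ∫ x in ρ..1, φ x * ((↑n + 1) * F x ^ n * f x) =
        ∫ x in ρ..1, (x * ((n+1 : ℕ) : ℝ) * F x ^ n * f x -
          ((n+1 : ℕ) : ℝ) * ((1 - F x) * F x ^ n)) := by
      apply intervalIntegral.integral_congr
      intro x hx
      rw [Set.uIcc_of_le hρ1.le] at hx
      have hfx : f x ≠ 0 := ne_of_gt (hfpos x ⟨hρ0.le.trans hx.1, hx.2⟩)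
      dsimp only
      rw [hφ x]
      push_cast
      field_simp
    rw [hcongr, intervalIntegral.integral_sub hxint (hJ2.const_mul _), hsplit1,
      intervalIntegral.integral_const_mul]
  by_cases hklt : k < n + 1
  · have hm1 : 1 ≤ m := by omega
    have hkm : k + m = n + 1 := by omega
    obtain ⟨j, hjm⟩ : ∃ j : ℕ, m = j + 1 := ⟨m - 1, by omega⟩
    have hpowkm : F ρ ^ (n+1) = F ρ ^ k * F ρ ^ m := by rw [← pow_add, hkm]
    have hφcont : ContinuousOn φ (Set.Icc 0 1) := hφC1.continuousOn
    have hφderiv : ∀ x ∈ Set.Ioo (0:ℝ) 1, HasDerivAt φ (deriv φ x) x := by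
      intro x hx
      have hmem : Set.Icc (0:ℝ) 1 ∈ 𝓝 x := Icc_mem_nhds hx.1 hx.2
      have hd := (hφC1.differentiableOn one_ne_zero) x (Set.mem_Icc_of_Ioo hx)
      exact (hd.differentiableAt hmem).hasDerivAt
    have hdWcont : ContinuousOn (derivWithin φ (Set.Icc 0 1)) (Set.Icc 0 1) :=
      hφC1.continuousOn_derivWithin (uniqueDiffOn_Icc one_pos) le_rfl
    have hintp2 : IntervalIntegrable (fun x => (F x / F ρ) ^ m * deriv φ x) volume 0 ρ := by
      rw [intervalIntegrable_iff_integrableOn_Ioo_of_le hρ0.le]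
      have hG : IntegrableOn (fun x => (F x / F ρ) ^ m * derivWithin φ (Set.Icc 0 1) x)
          (Set.Ioo 0 ρ) volume := by
        apply IntegrableOn.mono_set ?_ Set.Ioo_subset_Icc_self
        apply ContinuousOn.integrableOn_Icc
        exact (((hFc.continuousOn).div_const (F ρ)).pow m).mul
          (hdWcont.mono (Set.Icc_subset_Icc le_rfl hρ1.le))
      apply hG.congr_fun ?_ measurableSet_Ioo
      intro x hx
      have hmem : Set.Icc (0:ℝ) 1 ∈ 𝓝 x := Icc_mem_nhds hx.1 (hx.2.trans hρ1)
      dsimp only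
      rw [derivWithin_of_mem_nhds hmem]
    have hintp1 : IntervalIntegrable
        (fun x => (m:ℝ) * (F x / F ρ) ^ (m-1) * (f x / F ρ) * φ x) volume 0 ρ := by
      apply ContinuousOn.intervalIntegrable
      rw [Set.uIcc_of_le hρ0.le]
      have hfc' : ContinuousOn f (Set.Icc 0 ρ) := hfc.mono (Set.Icc_subset_Icc le_rfl hρ1.le)
      have hφc' : ContinuousOn φ (Set.Icc 0 ρ) := hφcont.mono (Set.Icc_subset_Icc le_rfl hρ1.le)
      exact ((continuousOn_const.mul (((hFc.continuousOn).div_const (F ρ)).pow (m-1))).mul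
        (hfc'.div_const (F ρ))).mul hφc'
    have hcontg : ContinuousOn (fun y => (F y / F ρ) ^ m * φ y) (Set.Icc 0 ρ) :=
      (((hFc.continuousOn).div_const (F ρ)).pow m).mul
        (hφC1.continuousOn.mono (Set.Icc_subset_Icc le_rfl hρ1.le))
    have hderivg : ∀ x ∈ Set.Ioo 0 ρ, HasDerivAt (fun y => (F y / F ρ) ^ m * φ y)
        ((m:ℝ) * (F x / F ρ) ^ (m-1) * (f x / F ρ) * φ x + (F x / F ρ) ^ m * deriv φ x) x := by
      intro x hx
      have hx' : x ∈ Set.Ioo (0:ℝ) 1 := ⟨hx.1, hx.2.trans hρ1⟩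
      have hd1 : HasDerivAt (fun y => (F y / F ρ) ^ m)
          ((m:ℝ) * (F x / F ρ) ^ (m-1) * (f x / F ρ)) x :=
        ((hFd x hx').div_const (F ρ)).pow m
      have h := hd1.mul (hφderiv x hx')
      exact h
    have hFTCφ : ∫ x in (0:ℝ)..ρ, ((m:ℝ) * (F x / F ρ) ^ (m-1) * (f x / F ρ) * φ x
        + (F x / F ρ) ^ m * deriv φ x) = 0 := by
      have key := intervalIntegral.integral_eq_sub_of_hasDerivAt_of_le hρ0.le hcontg hderivg
        (hintp1.add hintp2)
      rw [key, hφρ, hF0, mul_zero, zero_div, zero_pow (show m ≠ 0 by omega), zero_mul, sub_zero]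
    have hFTC2 : ∫ t in (0:ℝ)..ρ, (F t ^ m + t * (m:ℝ) * F t ^ (m-1) * f t) = ρ * F ρ ^ m := by
      have h := hxFpow m 0 ρ le_rfl hρ0.le hρ1.le
      rw [hF0] at h
      simpa [zero_pow (show m ≠ 0 by omega)] using h
    have hxmint : IntervalIntegrable (fun t => t * (m:ℝ) * F t ^ (m-1) * f t) volume 0 ρ :=
      (hfi 0 ρ).continuousOn_mul
        ((continuous_id.mul continuous_const).mul (hFc.pow (m-1))).continuousOn
    have hxm : ∫ t in (0:ℝ)..ρ, t * (m:ℝ) * F t ^ (m-1) * f t =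
        ρ * F ρ ^ m - ∫ t in (0:ℝ)..ρ, F t ^ m := by
      rw [← hFTC2, intervalIntegral.integral_add hI1 hxmint]; ring
    have hp1val : ∫ x in (0:ℝ)..ρ, (m:ℝ) * (F x / F ρ) ^ (m-1) * (f x / F ρ) * φ x =
        (1 / F ρ ^ m) * ((ρ * F ρ ^ m - ∫ t in (0:ℝ)..ρ, F t ^ m)
          - (m:ℝ) * ∫ t in (0:ℝ)..ρ, (1 - F t) * F t ^ (m-1)) := by
      have hcongr : ∫ x in (0:ℝ)..ρ, (m:ℝ) * (F x / F ρ) ^ (m-1) * (f x / F ρ) * φ x =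
          ∫ x in (0:ℝ)..ρ, (1 / F ρ ^ m) * (x * (m:ℝ) * F x ^ (m-1) * f x
            - (m:ℝ) * ((1 - F x) * F x ^ (m-1))) := by
        apply intervalIntegral.integral_congr
        intro x hx
        rw [Set.uIcc_of_le hρ0.le] at hx
        have hfx : f x ≠ 0 := ne_of_gt (hfpos x ⟨hx.1, hx.2.trans hρ1.le⟩)
        have hFρ : F ρ ≠ 0 := ne_of_gt hFρpos
        dsimp only
        rw [hφ x, hjm]
        simp only [Nat.add_sub_cancel]
        field_simp
        have hFj : F ρ ^ j * (F ρ)⁻¹ ^ j = 1 := by rw [← mul_pow, mul_inv_cancel₀ hFρ, one_pow]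
        linear_combination (F x * F x ^ j * F ρ - F x ^ j * F ρ + F x ^ j * F ρ * f x * x) * hFj
      rw [hcongr, intervalIntegral.integral_const_mul,
        intervalIntegral.integral_sub hxmint (hI2.const_mul _), hxm,
        intervalIntegral.integral_const_mul]
    have hp2val : F ρ ^ (n+1) * ∫ x in (0:ℝ)..ρ, (F x / F ρ) ^ m * deriv φ x =
        -(ρ * F ρ ^ (n+1) - F ρ ^ k * (∫ t in (0:ℝ)..ρ, F t ^ m)
          - (m:ℝ) * (F ρ ^ k * ∫ t in (0:ℝ)..ρ, (1 - F t) * F t ^ (m-1))) := by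
      have hsum := hFTCφ
      rw [intervalIntegral.integral_add hintp1 hintp2] at hsum
      have h2 : ∫ x in (0:ℝ)..ρ, (F x / F ρ) ^ m * deriv φ x =
          - ∫ x in (0:ℝ)..ρ, (m:ℝ) * (F x / F ρ) ^ (m-1) * (f x / F ρ) * φ x := by linarith
      rw [h2, hp1val, hpowkm]
      have hFρm : F ρ ^ m ≠ 0 := pow_ne_zero _ (ne_of_gt hFρpos)
      field_simp
    rw [if_pos hklt, hAeq, hBeq, hR1eq, hp2val]
    push_cast
    ring
  · rw [if_neg hklt, sub_zero]
    have hm0 : m = 0 := by omega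
    have hI1ρ : ∫ t in (0:ℝ)..ρ, F t ^ m = ρ := by
      rw [hm0]; simp
    have hkeq : k = n + 1 := by omega
    rw [hAeq, hBeq, hR1eq, hI1ρ, hm0, hkeq]
    push_cast
    ring
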